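/- Let |φ⟩ = Σ_{n≥0} c_n |n⟩ with c_n ≠ 0 for all n, in a Hilbert space with orthonormal basis {|n⟩}, and let U_t = Σ_n e^{iω_n t}|n⟩⟨n| with pairwise distinct frequencies ω_n. Then for the confusability graph Γ(ℝ, H, U, |φ⟩) (time-translation group), the connected component of 0 is all of ℝ and the spanned subspace S equals the closed span of {|n⟩ : n ≥ 0}, i.e., the whole Hilbert space. -/

import Mathlib

open scoped InnerProductSpace


lemma aux_norm1 (r t : ℝ) : ‖Complex.exp (Complex.I * (r:ℂ) * (t:ℂ))‖ = 1 := by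
  rw [show Complex.I * (r:ℂ) * (t:ℂ) = ((r * t : ℝ):ℂ) * Complex.I by push_cast; ring,
    Complex.norm_exp_ofReal_mul_I]

lemma aux_repr {H : Type*} [NormedAddCommGroup H] [InnerProductSpace ℂ H] [CompleteSpace H]
    (b : HilbertBasis ℕ ℂ H) (ω : ℕ → ℝ) (U : ℝ → (H ≃ₗᵢ[ℂ] H))
    (hU : ∀ (τ : ℝ) (n : ℕ),
      U τ (b n) = Complex.exp (Complex.I * (ω n : ℂ) * (τ : ℂ)) • b n)
    (φ : H) (τ : ℝ) (n : ℕ) :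
    b.repr (U τ φ) n = Complex.exp (Complex.I * (ω n : ℂ) * (τ : ℂ)) * b.repr φ n := by
  set e : ℂ := Complex.exp (Complex.I * (ω n : ℂ) * (τ : ℂ)) with he
  have he0 : e ≠ 0 := Complex.exp_ne_zero _
  have hsymm : (U τ).symm (b n) = e⁻¹ • b n := by
    have h1 := congrArg (U τ).symm (hU τ n)
    rw [(U τ).symm_apply_apply, map_smul] at h1
    have h2 : e⁻¹ • (e • (U τ).symm (b n)) = (U τ).symm (b n) := by
      rw [smul_smul, inv_mul_cancel₀ he0, one_smul]
    rw [← h1] at h2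
    exact h2.symm
  have hconj : (starRingEnd ℂ) e⁻¹ = e := by
    rw [map_inv₀, he, ← Complex.exp_conj]
    simp only [map_mul, Complex.conj_I, Complex.conj_ofReal]
    rw [show -Complex.I * (ω n : ℂ) * (τ : ℂ) = -(Complex.I * (ω n : ℂ) * (τ : ℂ)) by ring,
      Complex.exp_neg, inv_inv]
  calc b.repr (U τ φ) n = ⟪b n, U τ φ⟫_ℂ := b.repr_apply_apply _ _
    _ = ⟪U τ ((U τ).symm (b n)), U τ φ⟫_ℂ := by rw [(U τ).apply_symm_apply]
    _ = ⟪(U τ).symm (b n), φ⟫_ℂ := (U τ).inner_map_map _ _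
    _ = (starRingEnd ℂ) e⁻¹ * ⟪b n, φ⟫_ℂ := by rw [hsymm, inner_smul_left]
    _ = e * b.repr φ n := by rw [hconj, ← b.repr_apply_apply]

lemma aux_inner {H : Type*} [NormedAddCommGroup H] [InnerProductSpace ℂ H] [CompleteSpace H]
    (b : HilbertBasis ℕ ℂ H) (ω : ℕ → ℝ) (U : ℝ → (H ≃ₗᵢ[ℂ] H))
    (hU : ∀ (τ : ℝ) (n : ℕ),
      U τ (b n) = Complex.exp (Complex.I * (ω n : ℂ) * (τ : ℂ)) • b n)
    (φ : H) (τ : ℝ) (x : H) :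
    ⟪U τ φ, x⟫_ℂ = ∑' n, Complex.exp (-(Complex.I * (ω n : ℂ) * (τ : ℂ))) *
      ((starRingEnd ℂ) (b.repr φ n) * b.repr x n) := by
  rw [← b.tsum_inner_mul_inner (U τ φ) x]
  refine tsum_congr fun n => ?_
  rw [← inner_conj_symm (𝕜 := ℂ) (U τ φ) (b n), ← b.repr_apply_apply, ← b.repr_apply_apply,
    aux_repr b ω U hU φ τ n, map_mul, ← Complex.exp_conj]
  simp only [map_mul, Complex.conj_I, Complex.conj_ofReal]
  rw [show -Complex.I * (ω n : ℂ) * (τ : ℂ) = -(Complex.I * (ω n : ℂ) * (τ : ℂ)) by ring]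
  ring


lemma aux_sq_summable {H : Type*} [NormedAddCommGroup H] [InnerProductSpace ℂ H] [CompleteSpace H]
    (b : HilbertBasis ℕ ℂ H) (x : H) : Summable fun n => ‖b.repr x n‖ ^ 2 := by
  have h : ∀ n, ⟪x, b n⟫_ℂ * ⟪b n, x⟫_ℂ = ((‖b.repr x n‖ ^ 2 : ℝ) : ℂ) := fun n => by
    rw [← inner_conj_symm (𝕜 := ℂ) x (b n), ← b.repr_apply_apply, RCLike.conj_mul]
    norm_cast
  exact Complex.summable_ofReal.mp ((b.summable_inner_mul_inner x x).congr h)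

lemma aux_mul_summable {H : Type*} [NormedAddCommGroup H] [InnerProductSpace ℂ H] [CompleteSpace H]
    (b : HilbertBasis ℕ ℂ H) (x y : H) : Summable fun n => ‖b.repr x n‖ * ‖b.repr y n‖ := by
  refine Summable.of_nonneg_of_le (fun n => by positivity) (fun n => ?_)
    (((aux_sq_summable b x).add (aux_sq_summable b y)).div_const 2)
  nlinarith [sq_nonneg (‖b.repr x n‖ - ‖b.repr y n‖)]

open Filter Topology in
/-- For the time-translation representation `U_t|n⟩ = e^{iω_n t}|n⟩` (with pairwise
distinct frequencies) and a state `|φ⟩ = Σ c_n|n⟩` with all `c_n ≠ 0`, the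
confusability graph on `ℝ` is connected (the component of `0` is all of `ℝ`) and the
closed span of the trajectory `{U_t|φ⟩ : t ∈ ℝ}` is the whole Hilbert space. -/
theorem time_translation_confusability_connected
    {H : Type*} [NormedAddCommGroup H] [InnerProductSpace ℂ H] [CompleteSpace H]
    (b : HilbertBasis ℕ ℂ H)
    (ω : ℕ → ℝ) (hω : Function.Injective ω)
    (U : ℝ → (H ≃ₗᵢ[ℂ] H))
    (hU : ∀ (τ : ℝ) (n : ℕ),
      U τ (b n) = Complex.exp (Complex.I * (ω n : ℂ) * (τ : ℂ)) • b n)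
    (φ : H) (hφ : ‖φ‖ = 1) (hc : ∀ n, b.repr φ n ≠ 0)
    (Conn : ℝ → ℝ → Prop)
    (hConn : Conn = Relation.ReflTransGen (fun σ τ : ℝ => ⟪U σ φ, U τ φ⟫_ℂ ≠ 0)) :
    {τ : ℝ | Conn 0 τ} = Set.univ ∧
      (Submodule.span ℂ (Set.range fun τ : ℝ => U τ φ)).topologicalClosure = ⊤ := by
  constructor
  · -- Part 1: connectivity
    subst hConn
    set f : ℝ → ℂ :=
      fun t => ∑' n, ((‖b.repr φ n‖ ^ 2 : ℝ) : ℂ) * Complex.exp (Complex.I * (ω n : ℂ) * (t : ℂ))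
      with hf
    have hstep : ∀ σ τ : ℝ, ⟪U σ φ, U τ φ⟫_ℂ = f (τ - σ) := by
      intro σ τ
      rw [aux_inner b ω U hU φ σ (U τ φ), hf]
      refine tsum_congr fun n => ?_
      rw [aux_repr b ω U hU φ τ n]
      have h1 : (starRingEnd ℂ) (b.repr φ n) * b.repr φ n = ((‖b.repr φ n‖ ^ 2 : ℝ) : ℂ) := by
        rw [RCLike.conj_mul]; norm_cast
      have h2 : Complex.exp (-(Complex.I * (ω n:ℂ) * (σ:ℂ))) *
          Complex.exp (Complex.I * (ω n:ℂ) * (τ:ℂ))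
          = Complex.exp (Complex.I * (ω n:ℂ) * ((τ - σ : ℝ):ℂ)) := by
        rw [← Complex.exp_add]; congr 1; push_cast; ring
      linear_combination (Complex.exp (-(Complex.I * (ω n:ℂ) * (σ:ℂ))) *
          Complex.exp (Complex.I * (ω n:ℂ) * (τ:ℂ))) * h1 +
        ((‖b.repr φ n‖ ^ 2 : ℝ) : ℂ) * h2
    have hfc : Continuous f := by
      refine continuous_tsum (fun n => ?_) (aux_sq_summable b φ) (fun n t => ?_)
      · exact continuous_const.mul
          (Complex.continuous_exp.comp (continuous_const.mul Complex.continuous_ofReal))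
      · rw [norm_mul, aux_norm1, mul_one, Complex.norm_real, Real.norm_of_nonneg (by positivity)]
    have hf0 : f 0 = 1 := by
      have h := hstep 0 0
      rw [sub_self] at h
      rw [← h, inner_self_eq_norm_sq_to_K, (U 0).norm_map, hφ]
      norm_num
    obtain ⟨ε, hε, hεne⟩ : ∃ ε > 0, ∀ t : ℝ, |t| < ε → f t ≠ 0 := by
      have h1 : ∀ᶠ t in nhds 0, f t ≠ 0 :=
        hfc.continuousAt.eventually_ne (by rw [hf0]; exact one_ne_zero)
      rw [Metric.eventually_nhds_iff] at h1
      exact ⟨_, h1.choose_spec.1, fun t ht =>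
        h1.choose_spec.2 (by simpa [Real.dist_eq] using ht)⟩
    have hstepR : ∀ σ τ : ℝ, |τ - σ| < ε → ⟪U σ φ, U τ φ⟫_ℂ ≠ 0 := fun σ τ h => by
      rw [hstep]; exact hεne _ h
    set R : ℝ → ℝ → Prop := fun σ τ => ⟪U σ φ, U τ φ⟫_ℂ ≠ 0 with hR
    have hopen : IsOpen {τ : ℝ | Relation.ReflTransGen R 0 τ} := by
      rw [Metric.isOpen_iff]
      intro τ hτ
      exact ⟨ε, hε, fun τ' hτ' =>
        hτ.tail (hstepR τ τ' (by simpa [Metric.mem_ball, Real.dist_eq] using hτ'))⟩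
    have hclosed : IsOpen {τ : ℝ | Relation.ReflTransGen R 0 τ}ᶜ := by
      rw [Metric.isOpen_iff]
      intro τ hτ
      exact ⟨ε, hε, fun τ' hτ' hτ'S =>
        hτ (hτ'S.tail (hstepR τ' τ (by rw [abs_sub_comm]; simpa [Metric.mem_ball, Real.dist_eq] using hτ')))⟩
    exact IsClopen.eq_univ ⟨isOpen_compl_iff.mp hclosed, hopen⟩ ⟨0, Relation.ReflTransGen.refl⟩
  · -- Part 2: density of the span of the trajectory
    rw [Submodule.topologicalClosure_eq_top_iff, Submodule.eq_bot_iff]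
    intro x hx
    -- x is orthogonal to every U τ φ
    have hx0 : ∀ τ : ℝ, ⟪U τ φ, x⟫_ℂ = 0 := fun τ =>
      (Submodule.mem_orthogonal _ _).mp hx _ (Submodule.subset_span ⟨τ, rfl⟩)
    set a : ℕ → ℂ := fun n => (starRingEnd ℂ) (b.repr φ n) * b.repr x n with ha
    have h0 : ∀ τ : ℝ, ∑' n, Complex.exp (-(Complex.I * (ω n : ℂ) * (τ:ℂ))) * a n = 0 := fun τ => by
      rw [← aux_inner b ω U hU φ τ x]; exact hx0 τ
    have hsa : Summable fun n => ‖a n‖ := by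
      refine (aux_mul_summable b φ x).congr fun n => ?_
      rw [ha]; rw [norm_mul, RCLike.norm_conj]
    -- main claim: every coefficient vanishes
    have key : ∀ m, a m = 0 := by
      intro m
      set lam : ℕ → ℝ := fun n => ω m - ω n with hlam
      -- the series sums to 0 pointwise after multiplying by exp(I ω_m τ)
      have hFsum0 : ∀ τ : ℝ, ∑' n, Complex.exp (Complex.I * (lam n : ℂ) * (τ:ℂ)) * a n = 0 := by
        intro τ
        have h1 : ∀ n, Complex.exp (Complex.I * (lam n:ℂ) * (τ:ℂ)) * a n
            = Complex.exp (Complex.I * (ω m:ℂ) * (τ:ℂ)) *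
              (Complex.exp (-(Complex.I * (ω n:ℂ) * (τ:ℂ))) * a n) := by
          intro n
          conv_rhs => rw [← mul_assoc, ← Complex.exp_add]
          congr 2
          simp only [hlam]
          push_cast
          ring
        rw [tsum_congr h1, tsum_mul_left, h0 τ, mul_zero]
      set F : ℕ → C(ℝ, ℂ) := fun n =>
        ⟨fun τ => Complex.exp (Complex.I * (lam n : ℂ) * (τ:ℂ)) * a n,
          (Complex.continuous_exp.comp (continuous_const.mul Complex.continuous_ofReal)).mul
            continuous_const⟩ with hF
      have hFnorm : ∀ (n : ℕ) (K : TopologicalSpace.Compacts ℝ), ‖(F n).restrict K‖ ≤ ‖a n‖ := by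
        intro n K
        refine (ContinuousMap.norm_le _ (norm_nonneg _)).mpr fun τ => ?_
        simp only [ContinuousMap.restrict_apply, hF, ContinuousMap.coe_mk]
        rw [norm_mul, aux_norm1, one_mul]
      have hInt0 : ∀ N : ℕ,
          ∑' n, (∫ τ in (0:ℝ)..(N:ℝ), Complex.exp (Complex.I * (lam n:ℂ) * (τ:ℂ))) * a n = 0 := by
        intro N
        have h2 : Summable fun n =>
            ‖(F n).restrict (⟨Set.uIcc (0:ℝ) (N:ℝ), isCompact_uIcc⟩ : TopologicalSpace.Compacts ℝ)‖ :=
          Summable.of_nonneg_of_le (fun n => norm_nonneg _) (fun n => hFnorm n _) hsa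
        have h3 := intervalIntegral.tsum_intervalIntegral_eq_of_summable_norm h2
        have h4 : ∀ n, (∫ τ in (0:ℝ)..(N:ℝ), Complex.exp (Complex.I * (lam n:ℂ) * (τ:ℂ))) * a n
            = ∫ τ in (0:ℝ)..(N:ℝ), F n τ := by
          intro n
          simp only [hF, ContinuousMap.coe_mk]
          rw [intervalIntegral.integral_mul_const]
        rw [tsum_congr h4, h3]
        have h5 : ∀ τ : ℝ, ∑' n, F n τ = 0 := fun τ => by
          simp only [hF, ContinuousMap.coe_mk]; exact hFsum0 τ
        simp only [h5, intervalIntegral.integral_zero]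
      -- normalized averages
      set g : ℕ → ℕ → ℂ := fun N n =>
        (N:ℂ)⁻¹ * ((∫ τ in (0:ℝ)..(N:ℝ), Complex.exp (Complex.I * (lam n:ℂ) * (τ:ℂ))) * a n)
        with hg
      have hzero : ∀ N : ℕ, ∑' n, g N n = 0 := by
        intro N
        simp only [hg]
        rw [tsum_mul_left, hInt0, mul_zero]
      have hb : ∀ (N : ℕ) (n : ℕ), ‖g N n‖ ≤ ‖a n‖ := by
        intro N n
        simp only [hg]
        rw [norm_mul, norm_mul, norm_inv, Complex.norm_natCast]
        have h1 : ‖∫ τ in (0:ℝ)..(N:ℝ), Complex.exp (Complex.I * (lam n:ℂ) * (τ:ℂ))‖ ≤ (N:ℝ) := by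
          have := intervalIntegral.norm_integral_le_of_norm_le_const (a := (0:ℝ)) (b := (N:ℝ)) (C := 1)
            (f := fun τ => Complex.exp (Complex.I * (lam n:ℂ) * (τ:ℂ)))
            (fun τ _ => le_of_eq (aux_norm1 _ _))
          simpa using this
        rcases eq_or_ne (N:ℝ) 0 with h | h
        · simp [h]
        · calc ((N:ℝ))⁻¹ * (‖∫ τ in (0:ℝ)..(N:ℝ), Complex.exp (Complex.I * (lam n:ℂ) * (τ:ℂ))‖ * ‖a n‖)
              ≤ ((N:ℝ))⁻¹ * ((N:ℝ) * ‖a n‖) := by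
                have : (0:ℝ) ≤ ((N:ℝ))⁻¹ := by positivity
                gcongr
            _ = ‖a n‖ := by field_simp
      have hpt : ∀ n, Tendsto (fun N : ℕ => g N n) atTop (𝓝 (if n = m then a m else 0)) := by
        intro n
        rcases eq_or_ne n m with hnm | hnm
        · subst hnm
          simp only [if_pos]
          have hev : ∀ᶠ N : ℕ in atTop, g N n = a n := by
            filter_upwards [eventually_ge_atTop 1] with N hN
            have hN0 : (N:ℂ) ≠ 0 := Nat.cast_ne_zero.mpr (by omega)
            have hl : lam n = 0 := sub_self _
            have e1 : (∫ τ in (0:ℝ)..(N:ℝ), Complex.exp (Complex.I * (lam n:ℂ) * (τ:ℂ)))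
                = ((N:ℝ):ℂ) := by simp [hl]
            simp only [hg, e1]
            push_cast
            rw [← mul_assoc, inv_mul_cancel₀ hN0, one_mul]
          exact Tendsto.congr' (by filter_upwards [hev] with N h using h.symm) tendsto_const_nhds
        · simp only [if_neg hnm]
          have hl : (Complex.I * (lam n:ℂ)) ≠ 0 := by
            apply mul_ne_zero Complex.I_ne_zero
            have : lam n ≠ 0 := sub_ne_zero.mpr (fun hh => hnm (hω hh).symm)
            exact_mod_cast this
          have hint : ∀ N : ℕ, (∫ τ in (0:ℝ)..(N:ℝ), Complex.exp (Complex.I * (lam n:ℂ) * (τ:ℂ)))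
              = (Complex.exp (Complex.I * (lam n:ℂ) * ((N:ℝ):ℂ)) - 1) / (Complex.I * (lam n:ℂ)) := by
            intro N
            have h6 := integral_exp_mul_complex (a := 0) (b := (N:ℝ)) hl
            simpa using h6
          apply squeeze_zero_norm
            (a := fun N : ℕ => (N:ℝ)⁻¹ * (2 / ‖Complex.I * (lam n:ℂ)‖ * ‖a n‖))
          · intro N
            simp only [hg]
            rw [hint N, norm_mul, norm_inv, Complex.norm_natCast, norm_mul, norm_div]
            gcongr
            refine (norm_sub_le _ _).trans ?_
            rw [aux_norm1, norm_one]
            norm_num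
          · have h2 : Tendsto (fun N : ℕ => ((N:ℝ))⁻¹) atTop (𝓝 0) :=
              tendsto_inv_atTop_zero.comp tendsto_natCast_atTop_atTop
            simpa using h2.mul_const _
      have hlim : Tendsto (fun N : ℕ => ∑' n, g N n) atTop (𝓝 (∑' n, if n = m then a m else 0)) :=
        tendsto_tsum_of_dominated_convergence hsa hpt (Eventually.of_forall hb)
      rw [tsum_ite_eq] at hlim
      have : Tendsto (fun _ : ℕ => (0:ℂ)) atTop (𝓝 (a m)) := by
        refine hlim.congr fun N => hzero N
      exact tendsto_nhds_unique this tendsto_const_nhds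
    -- conclude x = 0
    have hd0 : ∀ n, b.repr x n = 0 := fun n => by
      rcases mul_eq_zero.mp (key n) with h | h
      · have h' : b.repr φ n = 0 := by
          have h2 := congrArg (starRingEnd ℂ) h
          rwa [Complex.conj_conj, map_zero] at h2
        exact absurd h' (hc n)
      · exact h
    have hx00 : ⟪x, x⟫_ℂ = 0 := by
      rw [← b.tsum_inner_mul_inner x x]
      have h : ∀ n, ⟪x, b n⟫_ℂ * ⟪b n, x⟫_ℂ = 0 := fun n => by
        rw [← b.repr_apply_apply, hd0 n, mul_zero]
      rw [tsum_congr h]; exact tsum_zero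
    exact inner_self_eq_zero.mp hx00
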